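/- arXiv:1406.7078 — 6 statements merged into one kernel-verified Lean document; each statement's English description precedes it below -/
import Mathlib

section
/- Let x ≥ 2 and let q be an integer with 2 ≤ q ≤ x, and assume π(x;q,a) > 0 for every a ∈ (ℤ/qℤ)^*. Let X be the probability distribution on the set of primes p ≤ x given by Pr[X = p] = 1/(φ(q)·π(x;q,p mod q)) if gcd(p,q) = 1, and Pr[X = p] = 0 if p divides q (this is a probability distribution). Then its squared Euclidean imbalance satisfies the exact identity Δ₂²(X) = (1/π(x)²)·Σ_{a∈(ℤ/qℤ)^*} (1/π(x;q,a))·(π(x;q,a) − π(x)/φ(q))² + ω(q)/π(x)². -/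
/-- The finite set of primes `p ≤ x`. -/
def primesUpTo (x : ℕ) : Finset ℕ := (Finset.range (x + 1)).filter Nat.Prime

/-- `π(x)`, the number of primes `≤ x`. -/
def primePi (x : ℕ) : ℕ := (primesUpTo x).card

/-- `π(x;q,a)`, the number of primes `p ≤ x` with `p ≡ a (mod q)`. -/
def primePiMod (x q a : ℕ) : ℕ :=
  ((primesUpTo x).filter (fun p => p % q = a % q)).card

/-- Canonical representatives of the invertible classes `(ℤ/qℤ)^*`. -/
def residues (q : ℕ) : Finset ℕ := (Finset.range q).filter (fun a => Nat.Coprime a q)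

/-- `φ*ₓ(q) = #{a ∈ (ℤ/qℤ)^* : π(x;q,a) ≠ 0}`. -/
def phiStar (x q : ℕ) : ℕ := ((residues q).filter (fun a => primePiMod x q a ≠ 0)).card

/-- Let `x ≥ 2`, `2 ≤ q ≤ x`, and assume `π(x;q,a) > 0` for every
`a ∈ (ℤ/qℤ)^*`. Let `X` be the distribution on primes `p ≤ x` with
`Pr[X = p] = 1/(φ(q)·π(x;q,p mod q))` if `gcd(p,q) = 1` and `Pr[X = p] = 0` if `p ∣ q`.
Then `Δ₂²(X) = (1/π(x)²)·∑_{a∈(ℤ/qℤ)^*} (1/π(x;q,a))·(π(x;q,a) − π(x)/φ(q))² + ω(q)/π(x)²`. -/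
theorem sq_imbalance_eq (x q : ℕ) (hx : 2 ≤ x) (hq : 2 ≤ q) (hqx : q ≤ x)
    (hpos : ∀ a ∈ residues q, 0 < primePiMod x q a)
    (X : ℕ → ℝ)
    (hX : ∀ p ∈ primesUpTo x,
      X p = if Nat.Coprime p q
        then 1 / ((q.totient : ℝ) * (primePiMod x q (p % q) : ℝ)) else 0) :
    ∑ p ∈ primesUpTo x, (X p - 1 / (primePi x : ℝ)) ^ 2
      = (1 / (primePi x : ℝ) ^ 2) *
          ∑ a ∈ residues q, (1 / (primePiMod x q a : ℝ)) *
            ((primePiMod x q a : ℝ) - (primePi x : ℝ) / (q.totient : ℝ)) ^ 2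
        + (q.primeFactors.card : ℝ) / (primePi x : ℝ) ^ 2 := by
  classical
  have hq0 : 0 < q := by omega
  have hπ0 : 0 < primePi x := by
    refine Finset.card_pos.2 ⟨2, ?_⟩
    simp only [primesUpTo, Finset.mem_filter, Finset.mem_range]
    exact ⟨by omega, Nat.prime_two⟩
  have hπ : (0:ℝ) < (primePi x : ℝ) := by exact_mod_cast hπ0
  have hφ : (0:ℝ) < (q.totient : ℝ) := by exact_mod_cast Nat.totient_pos.mpr hq0
  -- split the sum
  rw [← Finset.sum_filter_add_sum_filter_not (primesUpTo x) (fun p => Nat.Coprime p q)]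
  have h2 : (primesUpTo x).filter (fun p => ¬ Nat.Coprime p q) = q.primeFactors := by
    ext p
    simp only [Finset.mem_filter, primesUpTo, Finset.mem_range, Nat.mem_primeFactors]
    constructor
    · rintro ⟨⟨hlt, hp⟩, hnc⟩
      exact ⟨hp, not_not.mp ((hp.coprime_iff_not_dvd).not.mp hnc), by omega⟩
    · rintro ⟨hp, hdvd, -⟩
      have hpq : p ≤ q := Nat.le_of_dvd hq0 hdvd
      exact ⟨⟨by omega, hp⟩, (hp.coprime_iff_not_dvd).not.mpr (not_not.mpr hdvd)⟩
  -- second sum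
  have hsum2 : ∑ p ∈ (primesUpTo x).filter (fun p => ¬ Nat.Coprime p q),
      (X p - 1 / (primePi x : ℝ)) ^ 2 = (q.primeFactors.card : ℝ) / (primePi x : ℝ) ^ 2 := by
    rw [h2]
    have : ∀ p ∈ q.primeFactors, (X p - 1 / (primePi x : ℝ)) ^ 2 = 1 / (primePi x : ℝ) ^ 2 := by
      intro p hp
      rw [← h2] at hp
      obtain ⟨hmem, hnc⟩ := Finset.mem_filter.mp hp
      rw [hX p hmem, if_neg hnc]
      field_simp
      ring
    rw [Finset.sum_congr rfl this, Finset.sum_const, nsmul_eq_mul]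
    ring
  rw [hsum2]
  congr 1
  -- first sum: group by residues
  have hmaps : ∀ p ∈ (primesUpTo x).filter (fun p => Nat.Coprime p q),
      p % q ∈ residues q := by
    intro p hp
    obtain ⟨hm, hc⟩ := Finset.mem_filter.mp hp
    simp only [residues, Finset.mem_filter, Finset.mem_range]
    refine ⟨Nat.mod_lt p hq0, ?_⟩
    unfold Nat.Coprime
    rw [← Nat.gcd_rec q p, Nat.gcd_comm]
    exact hc
  rw [← Finset.sum_fiberwise_of_maps_to hmaps (fun p => (X p - 1 / (primePi x : ℝ)) ^ 2)]
  · rw [Finset.mul_sum]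
    refine Finset.sum_congr rfl ?_
    intro a ha
    obtain ⟨ha1, ha2⟩ := Finset.mem_filter.mp ha
    have haq : a < q := Finset.mem_range.mp ha1
    have hfib : ((primesUpTo x).filter (fun p => Nat.Coprime p q)).filter
        (fun p => p % q = a) = (primesUpTo x).filter (fun p => p % q = a % q) := by
      ext p
      constructor
      · intro h
        obtain ⟨h1, hmod⟩ := Finset.mem_filter.mp h
        obtain ⟨hm, -⟩ := Finset.mem_filter.mp h1
        exact Finset.mem_filter.mpr ⟨hm, by rw [Nat.mod_eq_of_lt haq]; exact hmod⟩
      · intro h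
        obtain ⟨hm, hmod⟩ := Finset.mem_filter.mp h
        rw [Nat.mod_eq_of_lt haq] at hmod
        refine Finset.mem_filter.mpr ⟨Finset.mem_filter.mpr ⟨hm, ?_⟩, hmod⟩
        have : Nat.gcd p q = Nat.gcd a q := by
          rw [Nat.gcd_comm p q, Nat.gcd_rec q p, hmod, Nat.gcd_comm a q, Nat.gcd_rec q a,
            Nat.mod_eq_of_lt haq]
        unfold Nat.Coprime
        rw [this]; exact ha2
    have hcard : (((primesUpTo x).filter (fun p => Nat.Coprime p q)).filter
        (fun p => p % q = a)).card = primePiMod x q a := by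
      rw [hfib]; rfl
    have hval : ∀ p ∈ ((primesUpTo x).filter (fun p => Nat.Coprime p q)).filter
        (fun p => p % q = a), (X p - 1 / (primePi x : ℝ)) ^ 2
        = (1 / ((q.totient : ℝ) * (primePiMod x q a : ℝ)) - 1 / (primePi x : ℝ)) ^ 2 := by
      intro p hp
      obtain ⟨h1, hmod⟩ := Finset.mem_filter.mp hp
      obtain ⟨hm, hc⟩ := Finset.mem_filter.mp h1
      rw [hX p hm, if_pos hc, hmod]
    rw [Finset.sum_congr rfl hval, Finset.sum_const, hcard, nsmul_eq_mul]
    have hπa : (0:ℝ) < (primePiMod x q a : ℝ) := by exact_mod_cast hpos a ha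
    field_simp
    ring
end

section
/- Let x ≥ 2, let q be an integer with 2 ≤ q ≤ x, and let B > 0 and m ≥ 1 be reals. Assume that for every a ∈ (ℤ/qℤ)^* one has π(x;q,a) ≥ m and |π(x;q,a) − π(x)/φ(q)| ≤ B. Let X be the probability distribution on the primes p ≤ x given by Pr[X = p] = 1/(φ(q)·π(x;q,p mod q)) if gcd(p,q) = 1 and Pr[X = p] = 0 if p | q. Then Δ₂²(X) ≤ (φ(q)·B²/m + ω(q))/π(x)². -/
/-- Let `x ≥ 2`, `2 ≤ q ≤ x`, `B > 0`, `m ≥ 1` real. Assume that for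
every `a ∈ (ℤ/qℤ)^*` one has `π(x;q,a) ≥ m` and `|π(x;q,a) − π(x)/φ(q)| ≤ B`. Let `X` be
the distribution on primes `p ≤ x` with `Pr[X = p] = 1/(φ(q)·π(x;q,p mod q))` if
`gcd(p,q) = 1` and `Pr[X = p] = 0` if `p ∣ q`. Then
`Δ₂²(X) ≤ (φ(q)·B²/m + ω(q))/π(x)²`. -/
theorem sq_imbalance_le (x q : ℕ) (hx : 2 ≤ x) (hq : 2 ≤ q) (hqx : q ≤ x)
    (B m : ℝ) (hB : 0 < B) (hm : 1 ≤ m)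
    (hlow : ∀ a ∈ residues q, m ≤ (primePiMod x q a : ℝ))
    (hclose : ∀ a ∈ residues q,
      |(primePiMod x q a : ℝ) - (primePi x : ℝ) / (q.totient : ℝ)| ≤ B)
    (X : ℕ → ℝ)
    (hX : ∀ p ∈ primesUpTo x,
      X p = if Nat.Coprime p q
        then 1 / ((q.totient : ℝ) * (primePiMod x q (p % q) : ℝ)) else 0) :
    ∑ p ∈ primesUpTo x, (X p - 1 / (primePi x : ℝ)) ^ 2
      ≤ ((q.totient : ℝ) * B ^ 2 / m + (q.primeFactors.card : ℝ)) / (primePi x : ℝ) ^ 2 := by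
  have hP0 : 0 < primePi x := by
    apply Finset.card_pos.mpr
    exact ⟨2, by simp [primesUpTo, Finset.mem_filter, Finset.mem_range, Nat.prime_two]; omega⟩
  have hPR : (0:ℝ) < (primePi x : ℝ) := by exact_mod_cast hP0
  have hF0 : (0:ℝ) < (q.totient : ℝ) := by
    exact_mod_cast Nat.totient_pos.mpr (by omega)
  have hm0 : (0:ℝ) < m := lt_of_lt_of_le one_pos hm
  have hres_card : (residues q).card = q.totient := by
    unfold Nat.totient
    congr 1
    ext a
    simp [residues, Nat.coprime_comm]
  rw [← Finset.sum_filter_add_sum_filter_not (primesUpTo x) (fun p => Nat.Coprime p q)]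
  have hBnot : ∑ p ∈ (primesUpTo x).filter (fun p => ¬ Nat.Coprime p q),
      (X p - 1/(primePi x : ℝ))^2 ≤ (q.primeFactors.card : ℝ) / (primePi x : ℝ)^2 := by
    have hsub : (primesUpTo x).filter (fun p => ¬ Nat.Coprime p q) ⊆ q.primeFactors := by
      intro p hp
      simp only [Finset.mem_filter, primesUpTo, Finset.mem_range] at hp
      obtain ⟨⟨_, hpp⟩, hnc⟩ := hp
      rw [Nat.mem_primeFactors]
      refine ⟨hpp, ?_, by omega⟩
      by_contra hdvd
      exact hnc ((Nat.Prime.coprime_iff_not_dvd hpp).mpr hdvd)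
    have heq : ∀ p ∈ (primesUpTo x).filter (fun p => ¬ Nat.Coprime p q),
        (X p - 1/(primePi x : ℝ))^2 = 1/(primePi x : ℝ)^2 := by
      intro p hp
      rw [Finset.mem_filter] at hp
      rw [hX p hp.1, if_neg hp.2]
      ring
    rw [Finset.sum_congr rfl heq, Finset.sum_const, nsmul_eq_mul]
    have hcard : (((primesUpTo x).filter (fun p => ¬ Nat.Coprime p q)).card : ℝ)
        ≤ (q.primeFactors.card : ℝ) := by exact_mod_cast Finset.card_le_card hsub
    rw [mul_one_div, div_le_div_iff₀ (by positivity) (by positivity)]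
    nlinarith [sq_nonneg (primePi x : ℝ)]
  have hcop : ∑ p ∈ (primesUpTo x).filter (fun p => Nat.Coprime p q),
      (X p - 1/(primePi x : ℝ))^2 ≤ (q.totient : ℝ) * B^2 / m / (primePi x : ℝ)^2 := by
    have hmaps : ∀ p ∈ (primesUpTo x).filter (fun p => Nat.Coprime p q),
        p % q ∈ residues q := by
      intro p hp
      rw [Finset.mem_filter] at hp
      rw [residues, Finset.mem_filter, Finset.mem_range]
      refine ⟨Nat.mod_lt _ (by omega), ?_⟩
      have : Nat.gcd (p % q) q = Nat.gcd q p := (Nat.gcd_rec q p).symm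
      unfold Nat.Coprime at hp ⊢
      rw [this, Nat.gcd_comm]
      exact hp.2
    rw [← Finset.sum_fiberwise_of_maps_to hmaps]
    have hbound : ∀ a ∈ residues q,
        ∑ p ∈ ((primesUpTo x).filter (fun p => Nat.Coprime p q)).filter (fun p => p % q = a),
          (X p - 1/(primePi x : ℝ))^2 ≤ B^2 / (m * (primePi x : ℝ)^2) := by
      intro a ha
      have haq : a % q = a := Nat.mod_eq_of_lt (Finset.mem_range.mp (Finset.mem_filter.mp ha).1)
      set t : ℝ := (primePiMod x q a : ℝ) with ht
      have htm : m ≤ t := hlow a ha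
      have ht0 : (0:ℝ) < t := lt_of_lt_of_le hm0 htm
      have hcl := hclose a ha
      have heq2 : ∀ p ∈ ((primesUpTo x).filter (fun p => Nat.Coprime p q)).filter
            (fun p => p % q = a),
          (X p - 1/(primePi x : ℝ))^2
            = (1/((q.totient : ℝ) * t) - 1/(primePi x : ℝ))^2 := by
        intro p hp
        simp only [Finset.mem_filter] at hp
        rw [hX p hp.1.1, if_pos hp.1.2, hp.2]
      rw [Finset.sum_congr rfl heq2, Finset.sum_const, nsmul_eq_mul]
      have hsub2 : ((primesUpTo x).filter (fun p => Nat.Coprime p q)).filter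
          (fun p => p % q = a) ⊆ (primesUpTo x).filter (fun p => p % q = a % q) := by
        intro p hp
        simp only [Finset.mem_filter] at hp ⊢
        exact ⟨hp.1.1, by rw [haq]; exact hp.2⟩
      have hcard2 : ((((primesUpTo x).filter (fun p => Nat.Coprime p q)).filter
          (fun p => p % q = a)).card : ℝ) ≤ t := by
        rw [ht]
        exact_mod_cast Finset.card_le_card hsub2
      have hterm0 : (0:ℝ) ≤ (1/((q.totient : ℝ) * t) - 1/(primePi x : ℝ))^2 := sq_nonneg _
      have step1 : (((((primesUpTo x).filter (fun p => Nat.Coprime p q)).filter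
            (fun p => p % q = a)).card : ℝ))
            * (1/((q.totient : ℝ) * t) - 1/(primePi x : ℝ))^2
          ≤ t * (1/((q.totient : ℝ) * t) - 1/(primePi x : ℝ))^2 :=
        mul_le_mul_of_nonneg_right hcard2 hterm0
      refine le_trans step1 ?_
      have e1 : 1/((q.totient : ℝ) * t) - 1/(primePi x : ℝ)
          = ((primePi x : ℝ)/(q.totient : ℝ) - t) / (t * (primePi x : ℝ)) := by
        rw [eq_div_iff (by positivity)]
        field_simp
      rw [e1, div_pow]
      have e2 : t * (((primePi x : ℝ)/(q.totient : ℝ) - t)^2 / (t * (primePi x : ℝ))^2)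
          = ((primePi x : ℝ)/(q.totient : ℝ) - t)^2 / (t * (primePi x : ℝ)^2) := by
        field_simp
      rw [e2]
      apply div_le_div₀ (by positivity) ?_ (by positivity) ?_
      · have : ((primePi x : ℝ)/(q.totient : ℝ) - t)^2
            = (t - (primePi x : ℝ)/(q.totient : ℝ))^2 := by ring
        rw [this, ← sq_abs]
        exact pow_le_pow_left₀ (abs_nonneg _) hcl 2
      · exact mul_le_mul_of_nonneg_right htm (by positivity)
    calc ∑ a ∈ residues q, ∑ p ∈ ((primesUpTo x).filter (fun p => Nat.Coprime p q)).filter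
            (fun p => p % q = a), (X p - 1/(primePi x : ℝ))^2
        ≤ ∑ a ∈ residues q, B^2 / (m * (primePi x : ℝ)^2) := Finset.sum_le_sum hbound
      _ = (q.totient : ℝ) * B^2 / m / (primePi x : ℝ)^2 := by
          rw [Finset.sum_const, nsmul_eq_mul, hres_card]
          field_simp
  calc _ ≤ (q.totient : ℝ) * B^2 / m / (primePi x : ℝ)^2
        + (q.primeFactors.card : ℝ) / (primePi x : ℝ)^2 := add_le_add hcop hBnot
    _ = ((q.totient : ℝ) * B^2 / m + (q.primeFactors.card : ℝ)) / (primePi x : ℝ)^2 := by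
        rw [add_div]
end

section
/- Let x ≥ 2, let q be an integer with 2 ≤ q ≤ x, and let B > 0 be real. Assume that for every a ∈ (ℤ/qℤ)^* one has π(x;q,a) ≥ 1 and |π(x;q,a) − π(x)/φ(q)| ≤ B, and assume π(x) > 0. Let X be the probability distribution on the primes p ≤ x given by Pr[X = p] = 1/(φ(q)·π(x;q,p mod q)) if gcd(p,q) = 1 and Pr[X = p] = 0 if p | q. Then the statistical distance to uniform satisfies Δ₁(X) ≤ √((φ(q)·B² + ω(q))/π(x)). -/
lemma cop_mod (p q : ℕ) : Nat.Coprime (p % q) q ↔ Nat.Coprime p q := by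
  unfold Nat.Coprime
  rw [← Nat.gcd_rec, Nat.gcd_comm]

lemma card_residues (q : ℕ) : (residues q).card = q.totient := by
  rw [Nat.totient]
  congr 1
  apply Finset.filter_congr
  intro a _
  simp [Nat.coprime_comm]

lemma filter_not_coprime (x q : ℕ) (hq : 2 ≤ q) (hqx : q ≤ x) :
    (primesUpTo x).filter (fun p => ¬ Nat.Coprime p q) = q.primeFactors := by
  ext p
  simp only [primesUpTo, Finset.mem_filter, Finset.mem_range, Nat.mem_primeFactors,
    Nat.lt_succ_iff]
  constructor
  · rintro ⟨⟨hpx, hp⟩, hnc⟩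
    exact ⟨hp, by rwa [hp.coprime_iff_not_dvd, not_not] at hnc, by omega⟩
  · rintro ⟨hp, hdvd, _⟩
    refine ⟨⟨le_trans (Nat.le_of_dvd (by omega) hdvd) hqx, hp⟩, ?_⟩
    rw [hp.coprime_iff_not_dvd, not_not]
    exact hdvd

lemma fiber_eq (x q a : ℕ) (ha : a ∈ residues q) :
    ((primesUpTo x).filter (fun p => Nat.Coprime p q)).filter (fun p => p % q = a)
      = (primesUpTo x).filter (fun p => p % q = a % q) := by
  simp only [residues, Finset.mem_filter, Finset.mem_range] at ha
  have haq : a % q = a := Nat.mod_eq_of_lt ha.1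
  rw [Finset.filter_filter]
  apply Finset.filter_congr
  intro p _
  simp only [haq]
  constructor
  · rintro ⟨_, h⟩; exact h
  · intro h
    refine ⟨?_, h⟩
    rw [← cop_mod p q, h]
    exact ha.2

/-- Let `x ≥ 2`, `2 ≤ q ≤ x`, `B > 0` real. Assume that for every
`a ∈ (ℤ/qℤ)^*` one has `π(x;q,a) ≥ 1` and `|π(x;q,a) − π(x)/φ(q)| ≤ B`, and `π(x) > 0`.
Let `X` be the distribution on primes `p ≤ x` with `Pr[X = p] = 1/(φ(q)·π(x;q,p mod q))`
if `gcd(p,q) = 1` and `Pr[X = p] = 0` if `p ∣ q`. Then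
`Δ₁(X) ≤ √((φ(q)·B² + ω(q))/π(x))`. -/
theorem statDist_le (x q : ℕ) (hx : 2 ≤ x) (hq : 2 ≤ q) (hqx : q ≤ x)
    (B : ℝ) (hB : 0 < B)
    (hpos : ∀ a ∈ residues q, 1 ≤ primePiMod x q a)
    (hclose : ∀ a ∈ residues q,
      |(primePiMod x q a : ℝ) - (primePi x : ℝ) / (q.totient : ℝ)| ≤ B)
    (hπ : 0 < primePi x)
    (X : ℕ → ℝ)
    (hX : ∀ p ∈ primesUpTo x,
      X p = if Nat.Coprime p q
        then 1 / ((q.totient : ℝ) * (primePiMod x q (p % q) : ℝ)) else 0) :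
    ∑ p ∈ primesUpTo x, |X p - 1 / (primePi x : ℝ)|
      ≤ Real.sqrt (((q.totient : ℝ) * B ^ 2 + (q.primeFactors.card : ℝ)) / (primePi x : ℝ)) := by
  classical
  set S := primesUpTo x with hS
  set C := S.filter (fun p => Nat.Coprime p q) with hC
  set D := S.filter (fun p => ¬ Nat.Coprime p q) with hD
  set R := residues q with hR
  set πr : ℝ := (primePi x : ℝ) with hπrdef
  set φr : ℝ := (q.totient : ℝ) with hφrdef
  set ωr : ℝ := (q.primeFactors.card : ℝ) with hωrdef
  have hπr : (0:ℝ) < πr := by rw [hπrdef]; exact_mod_cast hπ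
  have hφn : 0 < q.totient := Nat.totient_pos.mpr (by omega)
  have hφr : (0:ℝ) < φr := by rw [hφrdef]; exact_mod_cast hφn
  have hωr0 : (0:ℝ) ≤ ωr := by positivity
  have hmap : ∀ p ∈ C, p % q ∈ R := by
    intro p hp
    rw [hC, Finset.mem_filter] at hp
    rw [hR]
    simp only [residues, Finset.mem_filter, Finset.mem_range]
    exact ⟨Nat.mod_lt _ (by omega), (cop_mod p q).mpr hp.2⟩
  have hfibcard : ∀ a ∈ R, (C.filter (fun p => p % q = a)).card = primePiMod x q a := by
    intro a ha
    rw [hC, fiber_eq x q a ha]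
    rfl
  -- D part
  have hDcard : D = q.primeFactors := filter_not_coprime x q hq hqx
  have hDsum : ∑ p ∈ D, |X p - 1 / πr| = ωr / πr := by
    have hterm : ∀ p ∈ D, |X p - 1 / πr| = 1 / πr := by
      intro p hp
      rw [hD, Finset.mem_filter] at hp
      rw [hX p hp.1, if_neg hp.2, zero_sub, abs_neg, abs_of_pos (by positivity)]
    rw [Finset.sum_congr rfl hterm, Finset.sum_const, hDcard, nsmul_eq_mul, hωrdef]
    ring
  -- C part
  have hCsum : ∑ p ∈ C, |X p - 1 / πr| ≤ φr * B / πr := by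
    rw [← Finset.sum_fiberwise_of_maps_to hmap (fun p => |X p - 1 / πr|)]
    have hinner : ∀ a ∈ R, ∑ p ∈ C.filter (fun p => p % q = a), |X p - 1 / πr| ≤ B / πr := by
      intro a ha
      set na : ℝ := (primePiMod x q a : ℝ) with hna
      have hna1 : (1:ℝ) ≤ na := by rw [hna]; exact_mod_cast hpos a ha
      have hna0 : (0:ℝ) < na := by linarith
      have hterm : ∀ p ∈ C.filter (fun p => p % q = a),
          |X p - 1 / πr| = |1 / (φr * na) - 1 / πr| := by
        intro p hp
        rw [Finset.mem_filter] at hp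
        have hpC := hp.1
        rw [hC, Finset.mem_filter] at hpC
        rw [hX p hpC.1, if_pos hpC.2, hp.2]
      rw [Finset.sum_congr rfl hterm, Finset.sum_const, hfibcard a ha, nsmul_eq_mul]
      have hkey : na * (1 / (φr * na) - 1 / πr) = (πr / φr - na) / πr := by
        field_simp
      calc na * |1 / (φr * na) - 1 / πr| = |na * (1 / (φr * na) - 1 / πr)| := by
            rw [abs_mul, abs_of_pos hna0]
        _ = |πr / φr - na| / πr := by rw [hkey, abs_div, abs_of_pos hπr]
        _ ≤ B / πr := by
            gcongr
            rw [abs_sub_comm]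
            exact hclose a ha
    calc ∑ a ∈ R, ∑ p ∈ C.filter (fun p => p % q = a), |X p - 1 / πr|
        ≤ ∑ a ∈ R, B / πr := Finset.sum_le_sum hinner
      _ = φr * B / πr := by
          rw [Finset.sum_const, nsmul_eq_mul, hR, card_residues]
          ring
  -- cardinality facts
  have hCcard : q.totient ≤ C.card := by
    rw [Finset.card_eq_sum_card_fiberwise hmap, ← card_residues q, ← hR,
      Finset.card_eq_sum_ones]
    apply Finset.sum_le_sum
    intro a ha
    rw [hfibcard a ha]
    exact hpos a ha
  have hsplit : C.card + D.card = primePi x := by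
    rw [hC, hD]
    exact Finset.card_filter_add_card_filter_not _
  have hπge : φr + ωr ≤ πr := by
    rw [hπrdef, hφrdef, hωrdef]
    have : q.totient + q.primeFactors.card ≤ primePi x := by
      rw [← hsplit, hDcard]
      omega
    exact_mod_cast this
  -- combine
  have htotal : ∑ p ∈ S, |X p - 1 / πr| ≤ (φr * B + ωr) / πr := by
    rw [← Finset.sum_filter_add_sum_filter_not S (fun p => Nat.Coprime p q), ← hC, ← hD,
      hDsum]
    have := hCsum
    linarith [hCsum, add_div (φr * B) ωr πr]
  refine htotal.trans ?_
  have h0 : (0:ℝ) ≤ (φr * B + ωr) / πr := by positivity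
  rw [← Real.sqrt_sq h0]
  apply Real.sqrt_le_sqrt
  rw [div_pow, div_le_div_iff₀ (by positivity) hπr]
  have h1 : (φr * B + ωr) ^ 2 ≤ (φr + ωr) * (φr * B ^ 2 + ωr) := by
    nlinarith [mul_nonneg (mul_nonneg hφr.le hωr0) (sq_nonneg (B - 1))]
  have h2 : (φr * B + ωr) ^ 2 ≤ πr * (φr * B ^ 2 + ωr) :=
    h1.trans (mul_le_mul_of_nonneg_right hπge (by positivity))
  nlinarith [mul_le_mul_of_nonneg_right h2 hπr.le]
end

section
/- Let x ≥ 2, let q be an integer with 2 ≤ q ≤ x, assume φ*ₓ(q) > 0 and π(x) > 0, and let X be the probability distribution on the primes p ≤ x given by Pr[X = p] = 1/(φ*ₓ(q)·π(x;q,p mod q)) when gcd(p,q) = 1 (and Pr[X = p] = 0 when p | q). Set S = √(Σ_{a∈(ℤ/qℤ)^*, π(x;q,a)≠0} (π(x;q,a) − π(x)/φ*ₓ(q))²). Then Δ₁(X) ≤ (S·√(φ*ₓ(q)) + ω(q))/π(x). -/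
/-- Let `x ≥ 2`, `2 ≤ q ≤ x`, `φ*ₓ(q) > 0`, `π(x) > 0`, and let `X` be
the distribution on primes `p ≤ x` with `Pr[X = p] = 1/(φ*ₓ(q)·π(x;q,p mod q))` when
`gcd(p,q) = 1` and `Pr[X = p] = 0` when `p ∣ q`. With
`S = √(∑_{a∈(ℤ/qℤ)^*, π(x;q,a)≠0} (π(x;q,a) − π(x)/φ*ₓ(q))²)`, one has
`Δ₁(X) ≤ (S·√(φ*ₓ(q)) + ω(q))/π(x)`. -/
theorem statDist_le_phiStar (x q : ℕ) (hx : 2 ≤ x) (hq : 2 ≤ q) (hqx : q ≤ x)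
    (hφ : 0 < phiStar x q) (hπ : 0 < primePi x)
    (X : ℕ → ℝ)
    (hX : ∀ p ∈ primesUpTo x,
      X p = if Nat.Coprime p q
        then 1 / ((phiStar x q : ℝ) * (primePiMod x q (p % q) : ℝ)) else 0) :
    ∑ p ∈ primesUpTo x, |X p - 1 / (primePi x : ℝ)|
      ≤ (Real.sqrt (∑ a ∈ (residues q).filter (fun a => primePiMod x q a ≠ 0),
            ((primePiMod x q a : ℝ) - (primePi x : ℝ) / (phiStar x q : ℝ)) ^ 2)
          * Real.sqrt (phiStar x q) + (q.primeFactors.card : ℝ)) / (primePi x : ℝ) := by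
  classical
  have hq0 : 0 < q := by omega
  have hπR : (0:ℝ) < (primePi x : ℝ) := by exact_mod_cast hπ
  have hφR : (0:ℝ) < (phiStar x q : ℝ) := by exact_mod_cast hφ
  set T : Finset ℕ := (residues q).filter (fun a => primePiMod x q a ≠ 0) with hTdef
  set Pi : ℝ := (primePi x : ℝ)
  set Φ : ℝ := (phiStar x q : ℝ)
  -- Part B : primes dividing q
  have hB : ∑ p ∈ (primesUpTo x).filter (fun p => ¬ Nat.Coprime p q), |X p - 1/Pi|
      ≤ (q.primeFactors.card : ℝ) / Pi := by
    have hsub : (primesUpTo x).filter (fun p => ¬ Nat.Coprime p q) ⊆ q.primeFactors := by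
      intro p hp
      simp only [Finset.mem_filter, primesUpTo, Finset.mem_range] at hp
      obtain ⟨⟨_, hprime⟩, hnc⟩ := hp
      exact Nat.mem_primeFactors.mpr
        ⟨hprime, not_not.mp (mt (hprime.coprime_iff_not_dvd).mpr hnc), by omega⟩
    have h1 : ∀ p ∈ (primesUpTo x).filter (fun p => ¬ Nat.Coprime p q),
        |X p - 1/Pi| = 1/Pi := by
      intro p hp
      rw [hX p (Finset.mem_of_mem_filter _ hp), if_neg (Finset.mem_filter.mp hp).2,
        zero_sub, abs_neg, abs_of_nonneg (by positivity)]
    rw [Finset.sum_congr rfl h1, Finset.sum_const, nsmul_eq_mul,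
      div_eq_mul_one_div ((q.primeFactors.card : ℝ)) Pi]
    have hcc : ((Finset.filter (fun p => ¬ Nat.Coprime p q) (primesUpTo x)).card : ℝ)
        ≤ (q.primeFactors.card : ℝ) := by exact_mod_cast Finset.card_le_card hsub
    have h0 : (0:ℝ) ≤ 1/Pi := by positivity
    exact mul_le_mul_of_nonneg_right hcc h0
  -- Part A : primes coprime to q
  have hA : ∑ p ∈ (primesUpTo x).filter (fun p => Nat.Coprime p q), |X p - 1/Pi|
      = (∑ a ∈ T, |((primePiMod x q a : ℝ)) - Pi/Φ|) / Pi := by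
    have hmap : ∀ p ∈ (primesUpTo x).filter (fun p => Nat.Coprime p q), p % q ∈ T := by
      intro p hp
      obtain ⟨hpP, hc⟩ := Finset.mem_filter.mp hp
      have hlt : p % q < q := Nat.mod_lt _ hq0
      have hc' : Nat.Coprime (p % q) q := by
        have : Nat.gcd q p = 1 := Nat.coprime_comm.mp hc
        rwa [Nat.gcd_rec] at this
      have hmm : p % q % q = p % q := Nat.mod_mod_of_dvd _ dvd_rfl
      refine Finset.mem_filter.mpr ⟨Finset.mem_filter.mpr ⟨Finset.mem_range.mpr hlt, hc'⟩, ?_⟩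
      have hpmem : p ∈ (primesUpTo x).filter (fun p' => p' % q = (p % q) % q) := by
        rw [Finset.mem_filter]
        exact ⟨hpP, by rw [hmm]⟩
      exact Finset.card_ne_zero_of_mem hpmem
    rw [← Finset.sum_fiberwise_of_maps_to hmap]
    rw [Finset.sum_div]
    refine Finset.sum_congr rfl ?_
    intro a ha
    obtain ⟨hares, hane⟩ := Finset.mem_filter.mp ha
    obtain ⟨haq, hacop⟩ := Finset.mem_filter.mp hares
    have haq' : a < q := Finset.mem_range.mp haq
    have hamod : a % q = a := Nat.mod_eq_of_lt haq'
    -- the fiber equals the defining set of primePiMod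
    have hfib : ((primesUpTo x).filter (fun p => Nat.Coprime p q)).filter (fun p => p % q = a)
        = (primesUpTo x).filter (fun p => p % q = a % q) := by
      rw [Finset.filter_filter]
      refine Finset.filter_congr ?_
      intro p hp
      simp only [hamod]
      constructor
      · exact fun h => h.2
      · intro h
        refine ⟨?_, h⟩
        have : Nat.gcd q p = Nat.gcd (p % q) q := Nat.gcd_rec q p
        rw [Nat.coprime_comm]
        show Nat.gcd q p = 1
        rw [this, h]
        exact hacop
    have hk0 : (0:ℝ) < (primePiMod x q a : ℝ) := by
      exact_mod_cast Nat.pos_of_ne_zero hane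
    have hterm : ∀ p ∈ ((primesUpTo x).filter (fun p => Nat.Coprime p q)).filter
        (fun p => p % q = a), |X p - 1/Pi| = |1/(Φ * (primePiMod x q a : ℝ)) - 1/Pi| := by
      intro p hp
      obtain ⟨hp1, hp2⟩ := Finset.mem_filter.mp hp
      obtain ⟨hpP, hc⟩ := Finset.mem_filter.mp hp1
      rw [hX p hpP, if_pos hc]
      have : p % q = a := hp2
      rw [this]
    rw [Finset.sum_congr rfl hterm, Finset.sum_const, hfib, nsmul_eq_mul]
    show (primePiMod x q a : ℝ) * |1/(Φ * (primePiMod x q a : ℝ)) - 1/Pi|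
        = |(primePiMod x q a : ℝ) - Pi/Φ| / Pi
    set k : ℝ := (primePiMod x q a : ℝ)
    have key : k * (1/(Φ * k) - 1/Pi) = -((k - Pi/Φ) / Pi) := by
      field_simp
      ring
    have habs : k * |1/(Φ * k) - 1/Pi| = |k * (1/(Φ * k) - 1/Pi)| := by
      rw [abs_mul, abs_of_pos hk0]
    rw [habs, key, abs_neg, abs_div, abs_of_pos hπR]
  -- Cauchy–Schwarz
  have hCS : ∑ a ∈ T, |((primePiMod x q a : ℝ)) - Pi/Φ|
      ≤ Real.sqrt (∑ a ∈ T, ((primePiMod x q a : ℝ) - Pi/Φ)^2) * Real.sqrt Φ := by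
    set u : ℕ → ℝ := fun a => (primePiMod x q a : ℝ) - Pi/Φ
    have h1 : (∑ a ∈ T, |u a|) ^ 2 ≤ (∑ a ∈ T, (u a)^2) * (T.card : ℝ) := by
      have := Finset.sum_mul_sq_le_sq_mul_sq T (fun a => |u a|) (fun _ => 1)
      simpa [sq_abs] using this
    have h2 : ∑ a ∈ T, |u a| = Real.sqrt ((∑ a ∈ T, |u a|)^2) :=
      by rw [Real.sqrt_sq (Finset.sum_nonneg (fun i _ => abs_nonneg (u i)))]
    have hcard : (T.card : ℝ) = Φ := by norm_num [hTdef, phiStar, Φ]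
    calc ∑ a ∈ T, |u a| = Real.sqrt ((∑ a ∈ T, |u a|)^2) := h2
      _ ≤ Real.sqrt ((∑ a ∈ T, (u a)^2) * (T.card : ℝ)) := Real.sqrt_le_sqrt h1
      _ = Real.sqrt (∑ a ∈ T, (u a)^2) * Real.sqrt (T.card : ℝ) :=
          Real.sqrt_mul (Finset.sum_nonneg (fun i _ => sq_nonneg (u i))) _
      _ = Real.sqrt (∑ a ∈ T, (u a)^2) * Real.sqrt Φ :=
          congrArg (fun t => Real.sqrt (∑ a ∈ T, (u a)^2) * Real.sqrt t) hcard
  -- combine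
  calc ∑ p ∈ primesUpTo x, |X p - 1/Pi|
      = ∑ p ∈ (primesUpTo x).filter (fun p => Nat.Coprime p q), |X p - 1/Pi|
        + ∑ p ∈ (primesUpTo x).filter (fun p => ¬ Nat.Coprime p q), |X p - 1/Pi| :=
        (Finset.sum_filter_add_sum_filter_not _ _ _).symm
    _ ≤ (∑ a ∈ T, |((primePiMod x q a : ℝ)) - Pi/Φ|) / Pi + (q.primeFactors.card : ℝ) / Pi := by
        rw [hA]; exact add_le_add le_rfl hB
    _ ≤ (Real.sqrt (∑ a ∈ T, ((primePiMod x q a : ℝ) - Pi/Φ)^2) * Real.sqrt Φ) / Pi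
        + (q.primeFactors.card : ℝ) / Pi := by
        exact add_le_add (div_le_div_of_nonneg_right hCS hπR.le) le_rfl
    _ = (Real.sqrt (∑ a ∈ T, ((primePiMod x q a : ℝ) - Pi/Φ)^2) * Real.sqrt Φ
        + (q.primeFactors.card : ℝ)) / Pi := by rw [add_div]
end

section
/- Let x ≥ 2 and let q ≥ 2 be an integer with φ*ₓ(q) > 0. Set S = √(Σ_{a∈(ℤ/qℤ)^*, π(x;q,a)≠0} (π(x;q,a) − π(x)/φ*ₓ(q))²). Then S ≤ √(Σ_{a∈(ℤ/qℤ)^*} (π(x;q,a) − π(x)/φ(q))²) + π(x)·(φ(q) − φ*ₓ(q))/(φ(q)·√(φ*ₓ(q))). -/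
lemma minkowski_finset (s : Finset ℕ) (f g : ℕ → ℝ) :
    Real.sqrt (∑ a ∈ s, (f a + g a) ^ 2)
      ≤ Real.sqrt (∑ a ∈ s, f a ^ 2) + Real.sqrt (∑ a ∈ s, g a ^ 2) := by
  let F : EuclideanSpace ℝ s := WithLp.toLp 2 (fun a => f a)
  let G : EuclideanSpace ℝ s := WithLp.toLp 2 (fun a => g a)
  have h := norm_add_le F G
  simp only [EuclideanSpace.norm_eq, Real.norm_eq_abs, sq_abs] at h
  calc Real.sqrt (∑ a ∈ s, (f a + g a) ^ 2)
      = Real.sqrt (∑ a : s, (F a + G a) ^ 2) := by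
        rw [← Finset.sum_attach s (fun a => (f a + g a) ^ 2)]; rfl
    _ ≤ _ := by
        refine h.trans_eq ?_
        congr 1 <;> rw [← Finset.sum_attach s] <;> rfl

/-- Let `x ≥ 2`, `q ≥ 2` with `φ*ₓ(q) > 0`, and set
`S = √(∑_{a∈(ℤ/qℤ)^*, π(x;q,a)≠0} (π(x;q,a) − π(x)/φ*ₓ(q))²)`. Then
`S ≤ √(∑_{a∈(ℤ/qℤ)^*} (π(x;q,a) − π(x)/φ(q))²)
  + π(x)·(φ(q) − φ*ₓ(q))/(φ(q)·√(φ*ₓ(q)))`. -/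
theorem sqrt_variance_phiStar_le (x q : ℕ) (hx : 2 ≤ x) (hq : 2 ≤ q)
    (hφ : 0 < phiStar x q) :
    Real.sqrt (∑ a ∈ (residues q).filter (fun a => primePiMod x q a ≠ 0),
        ((primePiMod x q a : ℝ) - (primePi x : ℝ) / (phiStar x q : ℝ)) ^ 2)
      ≤ Real.sqrt (∑ a ∈ residues q,
            ((primePiMod x q a : ℝ) - (primePi x : ℝ) / (q.totient : ℝ)) ^ 2)
        + (primePi x : ℝ) * ((q.totient : ℝ) - (phiStar x q : ℝ))
            / ((q.totient : ℝ) * Real.sqrt (phiStar x q)) := by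
  set A := (residues q).filter (fun a => primePiMod x q a ≠ 0) with hA
  set P : ℝ := (primePi x : ℝ) with hP
  set φ : ℝ := (q.totient : ℝ) with hφ'
  set s : ℝ := (phiStar x q : ℝ) with hs
  have hs0 : (0:ℝ) < s := by rw [hs]; exact_mod_cast hφ
  have hφ0 : (0:ℝ) < φ := by
    have := Nat.totient_pos.mpr (by omega : 0 < q)
    rw [hφ']; exact_mod_cast this
  have hsφ : s ≤ φ := by
    have h1 : phiStar x q ≤ (residues q).card := Finset.card_filter_le _ _
    rw [card_residues] at h1
    rw [hs, hφ']; exact_mod_cast h1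
  have hP0 : (0:ℝ) ≤ P := by positivity
  have hc : (0:ℝ) ≤ P / s - P / φ := by
    have := div_le_div_of_nonneg_left hP0 hs0 hsφ
    linarith
  have key : Real.sqrt (∑ a ∈ A, ((primePiMod x q a : ℝ) - P / s) ^ 2)
      ≤ Real.sqrt (∑ a ∈ A, ((primePiMod x q a : ℝ) - P / φ) ^ 2)
        + Real.sqrt (∑ _a ∈ A, (P / φ - P / s) ^ 2) := by
    have := minkowski_finset A (fun a => (primePiMod x q a : ℝ) - P / φ)
      (fun _ => P / φ - P / s)
    simpa using this
  refine key.trans (add_le_add ?_ ?_)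
  · apply Real.sqrt_le_sqrt
    apply Finset.sum_le_sum_of_subset_of_nonneg (Finset.filter_subset _ _)
    intros; positivity
  · have hcard : ∑ _a ∈ A, (P / φ - P / s) ^ 2 = s * (P / φ - P / s) ^ 2 := by
      rw [Finset.sum_const, nsmul_eq_mul]
      congr 1
    rw [hcard]
    have hsq : Real.sqrt (s * (P / φ - P / s) ^ 2) = Real.sqrt s * (P / s - P / φ) := by
      rw [Real.sqrt_mul hs0.le, Real.sqrt_sq_eq_abs, abs_sub_comm, abs_of_nonneg hc]
    rw [hsq]
    have hss : Real.sqrt s * Real.sqrt s = s := Real.mul_self_sqrt hs0.le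
    have hsqrt0 : (0:ℝ) < Real.sqrt s := Real.sqrt_pos.mpr hs0
    rw [le_div_iff₀ (by positivity)]
    have : P / s - P / φ = P * (φ - s) / (s * φ) := by field_simp
    rw [this]
    refine le_of_eq ?_
    calc Real.sqrt s * (P * (φ - s) / (s * φ)) * (φ * Real.sqrt s)
        = (Real.sqrt s * Real.sqrt s) * (P * (φ - s) * φ) / (s * φ) := by ring
      _ = P * (φ - s) := by rw [hss]; field_simp
end

section
/- Let T be a positive integer and let ξₐ, ξ ∈ (0,1]. Define ϖ(t) = (1−ξₐ)^{t−1}·ξₐ for integers 1 ≤ t ≤ T, and ϖ(t) = (1−ξₐ)^T·(1−ξ)^{t−T−1}·ξ for integers t > T, and let N = Σ_{t≥1} t·ϖ(t) (which converges). Then |N − 1/ξₐ| ≤ (1−ξₐ)^T · (2T + 1/ξ + 1/ξₐ). -/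
lemma aux_summable {r : ℝ} (h0 : 0 ≤ r) (h1 : r < 1) (c : ℝ) :
    Summable (fun n : ℕ => ((n : ℝ) + c) * r ^ n) := by
  have hr : ‖r‖ < 1 := by rwa [Real.norm_eq_abs, abs_of_nonneg h0]
  have s1 : Summable (fun n : ℕ => (n : ℝ) * r ^ n) := by
    simpa using summable_pow_mul_geometric_of_norm_lt_one 1 hr
  have s2 : Summable (fun n : ℕ => c * r ^ n) :=
    (summable_geometric_of_lt_one h0 h1).mul_left c
  exact (s1.add s2).congr fun n => by ring

lemma aux_tsum {r : ℝ} (h0 : 0 ≤ r) (h1 : r < 1) (c : ℝ) :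
    (1 - r) * ∑' n : ℕ, ((n : ℝ) + c) * r ^ n = r / (1 - r) + c := by
  have hr : ‖r‖ < 1 := by rwa [Real.norm_eq_abs, abs_of_nonneg h0]
  have s1 : Summable (fun n : ℕ => (n : ℝ) * r ^ n) := by
    simpa using summable_pow_mul_geometric_of_norm_lt_one 1 hr
  have s2 : Summable (fun n : ℕ => c * r ^ n) :=
    (summable_geometric_of_lt_one h0 h1).mul_left c
  have hne : (1 : ℝ) - r ≠ 0 := by linarith
  have hsplit : (∑' n : ℕ, ((n : ℝ) + c) * r ^ n)
      = (∑' n : ℕ, (n : ℝ) * r ^ n) + ∑' n : ℕ, c * r ^ n := by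
    rw [← Summable.tsum_add s1 s2]
    exact tsum_congr fun n => by ring
  rw [hsplit, tsum_coe_mul_geometric_of_norm_lt_one hr, tsum_mul_left,
    tsum_geometric_of_lt_one h0 h1]
  field_simp

/-- Let `T ≥ 1` and `ξₐ, ξ ∈ (0,1]`. Define
`ϖ(t) = (1−ξₐ)^{t−1}·ξₐ` for `1 ≤ t ≤ T` and `ϖ(t) = (1−ξₐ)^T·(1−ξ)^{t−T−1}·ξ` for
`t > T`, and let `N = ∑_{t≥1} t·ϖ(t)` (which converges). Then
`|N − 1/ξₐ| ≤ (1−ξₐ)^T · (2T + 1/ξ + 1/ξₐ)`. The sum over `t ≥ 1` is written as a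
sum over `t : ℕ` of `(t+1)·ϖ(t+1)`. -/
theorem twoPhase_expectation_close (T : ℕ) (hT : 0 < T) (ξa ξ : ℝ)
    (hξa : ξa ∈ Set.Ioc (0 : ℝ) 1) (hξ : ξ ∈ Set.Ioc (0 : ℝ) 1)
    (ϖ : ℕ → ℝ)
    (hϖ₁ : ∀ t, 1 ≤ t → t ≤ T → ϖ t = (1 - ξa) ^ (t - 1) * ξa)
    (hϖ₂ : ∀ t, T < t → ϖ t = (1 - ξa) ^ T * (1 - ξ) ^ (t - T - 1) * ξ) :
    Summable (fun t : ℕ => ((t : ℝ) + 1) * ϖ (t + 1)) ∧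
    |(∑' t : ℕ, ((t : ℝ) + 1) * ϖ (t + 1)) - 1 / ξa|
      ≤ (1 - ξa) ^ T * (2 * (T : ℝ) + 1 / ξ + 1 / ξa) := by
  obtain ⟨hξa0, hξa1⟩ := hξa
  obtain ⟨hξ0, hξ1⟩ := hξ
  have ha0 : (0:ℝ) ≤ 1 - ξa := by linarith
  have ha1 : (1:ℝ) - ξa < 1 := by linarith
  have hb0 : (0:ℝ) ≤ 1 - ξ := by linarith
  have hb1 : (1:ℝ) - ξ < 1 := by linarith
  set f : ℕ → ℝ := fun t => ((t : ℝ) + 1) * ϖ (t + 1) with hf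
  -- tail of f
  have htail : ∀ n : ℕ, f (n + T)
      = (1 - ξa) ^ T * ξ * (((n : ℝ) + ((T : ℝ) + 1)) * (1 - ξ) ^ n) := by
    intro n
    have h : ϖ (n + T + 1) = (1 - ξa) ^ T * (1 - ξ) ^ (n + T + 1 - T - 1) * ξ :=
      hϖ₂ _ (by omega)
    have hnn : n + T + 1 - T - 1 = n := by omega
    simp only [hf]
    rw [h, hnn]
    push_cast
    ring
  have hsumtail : Summable (fun n : ℕ => f (n + T)) := by
    have := (aux_summable hb0 hb1 ((T : ℝ) + 1)).mul_left ((1 - ξa) ^ T * ξ)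
    exact this.congr fun n => (htail n).symm
  have hsumf : Summable f := (summable_nat_add_iff T).mp hsumtail
  refine ⟨hsumf, ?_⟩
  -- geometric comparison function
  set g : ℕ → ℝ := fun t => ((t : ℝ) + 1) * ((1 - ξa) ^ t * ξa) with hg
  have hsumg : Summable g := by
    have := (aux_summable ha0 ha1 1).mul_right ξa
    exact this.congr fun n => by simp only [hg]; ring
  -- tsum of g is 1/ξa
  have hSa := aux_tsum ha0 ha1 1
  have hone : (1:ℝ) - (1 - ξa) = ξa := by ring
  rw [hone] at hSa
  have htsumg : ∑' t, g t = 1 / ξa := by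
    have h1 : ∑' t, g t = (∑' n : ℕ, ((n : ℝ) + 1) * (1 - ξa) ^ n) * ξa := by
      rw [← tsum_mul_right]
      exact tsum_congr fun n => by simp only [hg]; ring
    rw [h1]
    have : (∑' n : ℕ, ((n : ℝ) + 1) * (1 - ξa) ^ n) * ξa = ξa * ∑' n : ℕ, ((n : ℝ) + 1) * (1 - ξa) ^ n := by ring
    rw [this, hSa]
    field_simp
    ring
  -- head agreement
  have hhead : ∀ i ∈ Finset.range T, f i = g i := by
    intro i hi
    have hiT : i < T := Finset.mem_range.mp hi
    have h : ϖ (i + 1) = (1 - ξa) ^ (i + 1 - 1) * ξa := hϖ₁ _ (by omega) (by omega)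
    have hii : i + 1 - 1 = i := by omega
    simp only [hf, hg]
    rw [h, hii]
  -- tail of g
  have hgtail : ∀ n : ℕ, g (n + T)
      = ξa * (1 - ξa) ^ T * (((n : ℝ) + ((T : ℝ) + 1)) * (1 - ξa) ^ n) := by
    intro n
    simp only [hg]
    rw [pow_add]
    push_cast
    ring
  -- split sums
  have hsplitf := (Summable.sum_add_tsum_nat_add T hsumf).symm
  have hsplitg := (Summable.sum_add_tsum_nat_add T hsumg).symm
  -- tail tsums
  have htf : ∑' n : ℕ, f (n + T)
      = (1 - ξa) ^ T * ξ * ∑' n : ℕ, ((n : ℝ) + ((T : ℝ) + 1)) * (1 - ξ) ^ n := by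
    rw [← tsum_mul_left]
    exact tsum_congr htail
  have htg : ∑' n : ℕ, g (n + T)
      = ξa * (1 - ξa) ^ T * ∑' n : ℕ, ((n : ℝ) + ((T : ℝ) + 1)) * (1 - ξa) ^ n := by
    rw [← tsum_mul_left]
    exact tsum_congr hgtail
  have hSb' := aux_tsum hb0 hb1 ((T : ℝ) + 1)
  have honeb : (1:ℝ) - (1 - ξ) = ξ := by ring
  rw [honeb] at hSb'
  have hSa' := aux_tsum ha0 ha1 ((T : ℝ) + 1)
  rw [hone] at hSa'
  -- main identity
  have hdiff : (∑' t : ℕ, f t) - (∑' t : ℕ, g t) = (1 - ξa) ^ T * (1 / ξ - 1 / ξa) := by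
    have e1 : (1 - ξa) ^ T * ξ * ∑' n : ℕ, ((n : ℝ) + ((T : ℝ) + 1)) * (1 - ξ) ^ n
        = (1 - ξa) ^ T * ((1 - ξ) / ξ + ((T : ℝ) + 1)) := by
      rw [← hSb']; ring
    have e2 : ξa * (1 - ξa) ^ T * ∑' n : ℕ, ((n : ℝ) + ((T : ℝ) + 1)) * (1 - ξa) ^ n
        = (1 - ξa) ^ T * ((1 - ξa) / ξa + ((T : ℝ) + 1)) := by
      rw [← hSa']; ring
    have hheads : ∑ i ∈ Finset.range T, f i = ∑ i ∈ Finset.range T, g i :=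
      Finset.sum_congr rfl hhead
    rw [hsplitf, hsplitg, hheads, htf, htg, e1, e2]
    have hξne : ξ ≠ 0 := ne_of_gt hξ0
    have hξane : ξa ≠ 0 := ne_of_gt hξa0
    field_simp
    ring
  have hkey : (∑' t : ℕ, f t) - 1 / ξa = (1 - ξa) ^ T * (1 / ξ - 1 / ξa) := by
    rw [htsumg] at hdiff; exact hdiff
  rw [hkey, abs_mul, abs_of_nonneg (pow_nonneg ha0 T)]
  apply mul_le_mul_of_nonneg_left _ (pow_nonneg ha0 T)
  have h1 : 0 < 1 / ξ := by positivity
  have h2 : 0 < 1 / ξa := by positivity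
  have h3 : (0:ℝ) ≤ 2 * (T : ℝ) := by positivity
  rw [abs_le]
  constructor <;> [linarith; linarith]
end
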